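/- Let G be a graph with m edges and S ⊆ V(G). If the induced subgraph G[S] has a bisection of size at least e(G[S])/2 + x, then G has a bisection of size at least m/2 + x − 2√m. -/

import Mathlib

open Finset SimpleGraph

/-- `epairs G A B` is the number of ordered pairs `(u,v) ∈ A × B` with `u ~ v`.
For disjoint `A`, `B` this is the number of edges between `A` and `B`;
`epairs G S S` is twice the number of edges inside `S`. -/
def epairs {V : Type*} [DecidableEq V] (G : SimpleGraph V) [DecidableRel G.Adj]
    (A B : Finset V) : ℕ :=
  ((A ×ˢ B).filter fun p => G.Adj p.1 p.2).card

set_option linter.unusedSectionVars false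
set_option maxHeartbeats 1000000

section Helpers

variable {V : Type*} [Fintype V] [DecidableEq V] (G : SimpleGraph V) [DecidableRel G.Adj]

lemma epairs_comm (A B : Finset V) : epairs G A B = epairs G B A := by
  unfold epairs
  apply Finset.card_bij' (fun p _ => Prod.swap p) (fun p _ => Prod.swap p) <;>
    simp [G.adj_comm] <;> tauto

lemma epairs_union_left {A A' : Finset V} (B : Finset V) (h : Disjoint A A') :
    epairs G (A ∪ A') B = epairs G A B + epairs G A' B := by
  unfold epairs
  rw [Finset.union_product, Finset.filter_union, Finset.card_union_of_disjoint]
  apply Finset.disjoint_filter_filter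
  simp only [Finset.disjoint_left, Finset.mem_product]
  intro p hp hp'
  exact (Finset.disjoint_left.1 h) hp.1 hp'.1

lemma epairs_union_right (A : Finset V) {B B' : Finset V} (h : Disjoint B B') :
    epairs G A (B ∪ B') = epairs G A B + epairs G A B' := by
  rw [epairs_comm, epairs_union_left G A h, epairs_comm G B, epairs_comm G B']

lemma epairs_singleton_left (u : V) (B : Finset V) :
    epairs G {u} B = (B.filter (G.Adj u)).card := by
  unfold epairs
  rw [Finset.singleton_product, Finset.filter_map, Finset.card_map]
  rfl

lemma epairs_singleton_self (u : V) : epairs G {u} {u} = 0 := by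
  simp [epairs_singleton_left, Finset.filter_singleton]

lemma even_ext : ∀ (k : ℕ) (T A B : Finset V), T.card = 2 * k → Disjoint A T → Disjoint B T →
    ∃ Ta Tb : Finset V, Ta ∪ Tb = T ∧ Disjoint Ta Tb ∧ Ta.card = Tb.card ∧
      4 * epairs G A B + 2 * epairs G T A + 2 * epairs G T B + epairs G T T
        ≤ 4 * epairs G (A ∪ Ta) (B ∪ Tb) := by
  intro k
  induction k with
  | zero =>
    intro T A B hT _ _
    obtain rfl : T = ∅ := Finset.card_eq_zero.1 hT
    exact ⟨∅, ∅, by simp, by simp, rfl, by simp [epairs]⟩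
  | succ k ih =>
    intro T A B hT hAT hBT
    obtain ⟨u, hu⟩ : T.Nonempty := Finset.card_pos.1 (by omega)
    obtain ⟨v, hv⟩ : (T.erase u).Nonempty := Finset.card_pos.1 (by
      rw [Finset.card_erase_of_mem hu]; omega)
    set T' : Finset V := (T.erase u).erase v with hT'def
    have hvT : v ∈ T := Finset.mem_of_mem_erase hv
    have huv : u ≠ v := (Finset.ne_of_mem_erase hv).symm
    have huT' : u ∉ T' := fun h => Finset.notMem_erase u T (Finset.mem_of_mem_erase h)
    have hvT' : v ∉ T' := Finset.notMem_erase v _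
    have hT'sub : T' ⊆ T := (Finset.erase_subset _ _).trans (Finset.erase_subset _ _)
    have hT'card : T'.card = 2 * k := by
      rw [hT'def, Finset.card_erase_of_mem hv, Finset.card_erase_of_mem hu, hT]; omega
    have hTeq : T = {u} ∪ ({v} ∪ T') := by
      rw [← Finset.insert_eq, ← Finset.insert_eq, hT'def,
        Finset.insert_erase hv, Finset.insert_erase hu]
    -- disjointness facts
    have dAT' : Disjoint A T' := hAT.mono_right hT'sub
    have dBT' : Disjoint B T' := hBT.mono_right hT'sub
    have duT' : Disjoint ({u} : Finset V) T' := by simpa using huT'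
    have dvT' : Disjoint ({v} : Finset V) T' := by simpa using hvT'
    have dAu : Disjoint A ({u} : Finset V) := by
      simpa using Finset.disjoint_left.1 hAT.symm hu
    have dAv : Disjoint A ({v} : Finset V) := by
      simpa using Finset.disjoint_left.1 hAT.symm hvT
    have dBu : Disjoint B ({u} : Finset V) := by
      simpa using Finset.disjoint_left.1 hBT.symm hu
    have dBv : Disjoint B ({v} : Finset V) := by
      simpa using Finset.disjoint_left.1 hBT.symm hvT
    have duv : Disjoint ({u} : Finset V) ({v} : Finset V) := Finset.disjoint_singleton.2 huv
    have d1 : Disjoint ({u} : Finset V) ({v} ∪ T') :=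
      Finset.disjoint_union_right.2 ⟨duv, duT'⟩
    -- apply IH for both options
    obtain ⟨Ta₁, Tb₁, hU₁, hD₁, hC₁, hI₁⟩ := ih T' (A ∪ {u}) (B ∪ {v})
      hT'card (Finset.disjoint_union_left.2 ⟨dAT', duT'⟩)
      (Finset.disjoint_union_left.2 ⟨dBT', dvT'⟩)
    obtain ⟨Ta₂, Tb₂, hU₂, hD₂, hC₂, hI₂⟩ := ih T' (A ∪ {v}) (B ∪ {u})
      hT'card (Finset.disjoint_union_left.2 ⟨dAT', dvT'⟩)
      (Finset.disjoint_union_left.2 ⟨dBT', duT'⟩)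
    -- accounting
    have hTA : epairs G T A = epairs G {u} A + epairs G {v} A + epairs G T' A := by
      rw [hTeq, epairs_union_left G A d1, epairs_union_left G A dvT']; ring
    have hTB : epairs G T B = epairs G {u} B + epairs G {v} B + epairs G T' B := by
      rw [hTeq, epairs_union_left G B d1, epairs_union_left G B dvT']; ring
    have hTT : epairs G T T = 2 * epairs G {u} {v} + 2 * epairs G {u} T'
        + 2 * epairs G {v} T' + epairs G T' T' := by
      rw [hTeq, epairs_union_left G _ d1, epairs_union_left G _ dvT']
      simp only [epairs_union_right G _ d1, epairs_union_right G _ dvT',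
        epairs_singleton_self, epairs_comm G {v} {u}, epairs_comm G T' {u},
        epairs_comm G T' {v}]
      ring
    have hO₁ : epairs G (A ∪ {u}) (B ∪ {v}) = epairs G A B + epairs G {v} A
        + epairs G {u} B + epairs G {u} {v} := by
      rw [epairs_union_left G _ dAu, epairs_union_right G _ dBv,
        epairs_union_right G _ dBv, epairs_comm G A {v}]
      ring
    have hO₂ : epairs G (A ∪ {v}) (B ∪ {u}) = epairs G A B + epairs G {u} A
        + epairs G {v} B + epairs G {u} {v} := by
      rw [epairs_union_left G _ dAv, epairs_union_right G _ dBu,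
        epairs_union_right G _ dBu, epairs_comm G A {u}, epairs_comm G {v} {u}]
      ring
    have hT'A₁ : epairs G T' (A ∪ {u}) = epairs G T' A + epairs G {u} T' := by
      rw [epairs_union_right G _ dAu, epairs_comm G T' {u}]
    have hT'B₁ : epairs G T' (B ∪ {v}) = epairs G T' B + epairs G {v} T' := by
      rw [epairs_union_right G _ dBv, epairs_comm G T' {v}]
    have hT'A₂ : epairs G T' (A ∪ {v}) = epairs G T' A + epairs G {v} T' := by
      rw [epairs_union_right G _ dAv, epairs_comm G T' {v}]
    have hT'B₂ : epairs G T' (B ∪ {u}) = epairs G T' B + epairs G {u} T' := by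
      rw [epairs_union_right G _ dBu, epairs_comm G T' {u}]
    have key :
        (4 * epairs G (A ∪ {u}) (B ∪ {v}) + 2 * epairs G T' (A ∪ {u})
          + 2 * epairs G T' (B ∪ {v}) + epairs G T' T')
        + (4 * epairs G (A ∪ {v}) (B ∪ {u}) + 2 * epairs G T' (A ∪ {v})
          + 2 * epairs G T' (B ∪ {u}) + epairs G T' T')
        = 2 * (4 * epairs G A B + 2 * epairs G T A + 2 * epairs G T B + epairs G T T)
          + 4 * epairs G {u} {v} := by
      rw [hTA, hTB, hTT, hO₁, hO₂, hT'A₁, hT'B₁, hT'A₂, hT'B₂]; ring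
    have hTa₁ : Ta₁ ⊆ T' := hU₁ ▸ Finset.subset_union_left
    have hTb₁ : Tb₁ ⊆ T' := hU₁ ▸ Finset.subset_union_right
    have hTa₂ : Ta₂ ⊆ T' := hU₂ ▸ Finset.subset_union_left
    have hTb₂ : Tb₂ ⊆ T' := hU₂ ▸ Finset.subset_union_right
    have hcase : 4 * epairs G A B + 2 * epairs G T A + 2 * epairs G T B + epairs G T T
        ≤ 4 * epairs G (A ∪ {u}) (B ∪ {v}) + 2 * epairs G T' (A ∪ {u})
          + 2 * epairs G T' (B ∪ {v}) + epairs G T' T'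
      ∨ 4 * epairs G A B + 2 * epairs G T A + 2 * epairs G T B + epairs G T T
        ≤ 4 * epairs G (A ∪ {v}) (B ∪ {u}) + 2 * epairs G T' (A ∪ {v})
          + 2 * epairs G T' (B ∪ {u}) + epairs G T' T' := by omega
    rcases hcase with hc | hc
    · refine ⟨{u} ∪ Ta₁, {v} ∪ Tb₁, ?_, ?_, ?_, ?_⟩
      · rw [hTeq, ← hU₁]
        ext a; simp only [Finset.mem_union]; tauto
      · refine Finset.disjoint_union_left.2 ⟨Finset.disjoint_union_right.2 ⟨duv, ?_⟩,
          Finset.disjoint_union_right.2 ⟨?_, hD₁⟩⟩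
        · exact Finset.disjoint_singleton_left.2 (fun h => huT' (hTb₁ h))
        · exact Finset.disjoint_singleton_right.2 (fun h => hvT' (hTa₁ h))
      · rw [Finset.card_union_of_disjoint
            (Finset.disjoint_singleton_left.2 (fun h => huT' (hTa₁ h))),
          Finset.card_union_of_disjoint
            (Finset.disjoint_singleton_left.2 (fun h => hvT' (hTb₁ h))),
          hC₁]
        simp
      · calc 4 * epairs G A B + 2 * epairs G T A + 2 * epairs G T B + epairs G T T
            ≤ _ := hc
          _ ≤ 4 * epairs G (A ∪ {u} ∪ Ta₁) (B ∪ {v} ∪ Tb₁) := hI₁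
          _ = 4 * epairs G (A ∪ ({u} ∪ Ta₁)) (B ∪ ({v} ∪ Tb₁)) := by
            rw [Finset.union_assoc, Finset.union_assoc]
    · refine ⟨{v} ∪ Ta₂, {u} ∪ Tb₂, ?_, ?_, ?_, ?_⟩
      · rw [hTeq, ← hU₂]
        ext a; simp only [Finset.mem_union]; tauto
      · refine Finset.disjoint_union_left.2 ⟨Finset.disjoint_union_right.2 ⟨duv.symm, ?_⟩,
          Finset.disjoint_union_right.2 ⟨?_, hD₂⟩⟩
        · exact Finset.disjoint_singleton_left.2 (fun h => hvT' (hTb₂ h))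
        · exact Finset.disjoint_singleton_right.2 (fun h => huT' (hTa₂ h))
      · rw [Finset.card_union_of_disjoint
            (Finset.disjoint_singleton_left.2 (fun h => hvT' (hTa₂ h))),
          Finset.card_union_of_disjoint
            (Finset.disjoint_singleton_left.2 (fun h => huT' (hTb₂ h))),
          hC₂]
        simp
      · calc 4 * epairs G A B + 2 * epairs G T A + 2 * epairs G T B + epairs G T T
            ≤ _ := hc
          _ ≤ 4 * epairs G (A ∪ {v} ∪ Ta₂) (B ∪ {u} ∪ Tb₂) := hI₂
          _ = 4 * epairs G (A ∪ ({v} ∪ Ta₂)) (B ∪ ({u} ∪ Tb₂)) := by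
            rw [Finset.union_assoc, Finset.union_assoc]
lemma epairs_sum (A B : Finset V) : epairs G A B = ∑ a ∈ A, epairs G {a} B := by
  classical
  induction A using Finset.induction with
  | empty => simp [epairs]
  | insert a s h ih =>
    rw [Finset.insert_eq, epairs_union_left G B (by simpa using h), ih,
      ← Finset.insert_eq, Finset.sum_insert h]

lemma epairs_univ_univ : epairs G Finset.univ Finset.univ = 2 * G.edgeFinset.card := by
  rw [epairs_sum, ← SimpleGraph.sum_degrees_eq_twice_card_edges]
  refine Finset.sum_congr rfl fun u _ => ?_
  rw [epairs_singleton_left, ← SimpleGraph.neighborFinset_eq_filter]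
  rfl

lemma bal (A B : Finset V) (hU : A ∪ B = Finset.univ) (hd : Disjoint A B)
    (hc : A.card = B.card + 2) :
    ∃ A' B' : Finset V, A' ∪ B' = Finset.univ ∧ Disjoint A' B' ∧ A'.card = B'.card ∧
      (epairs G A B : ℝ) - 2 * Real.sqrt (G.edgeFinset.card) ≤ (epairs G A' B' : ℝ) := by
  have hA : A.Nonempty := Finset.card_pos.1 (by omega)
  obtain ⟨a, ha, hmin⟩ := Finset.exists_min_image A (fun a => epairs G {a} B) hA
  have haB : a ∉ B := Finset.disjoint_left.1 hd ha
  have hsum : A.card * epairs G {a} B ≤ epairs G A B := by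
    calc A.card * epairs G {a} B = ∑ _b ∈ A, epairs G {a} B := by
          rw [Finset.sum_const, smul_eq_mul]
      _ ≤ ∑ b ∈ A, epairs G {b} B := Finset.sum_le_sum (fun b hb => hmin b hb)
      _ = epairs G A B := (epairs_sum G A B).symm
  have hm : 2 * epairs G A B ≤ 2 * G.edgeFinset.card := by
    have h2 : epairs G Finset.univ Finset.univ
        = epairs G A A + epairs G A B + epairs G B A + epairs G B B := by
      rw [← hU, epairs_union_left G _ hd, epairs_union_right G _ hd,
        epairs_union_right G _ hd]
      ring
    have h1 := epairs_univ_univ G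
    have h3 : epairs G B A = epairs G A B := epairs_comm G B A
    omega
  have hn : Fintype.card V = A.card + B.card := by
    rw [← Finset.card_union_of_disjoint hd, hU, Finset.card_univ]
  have hmn : 2 * G.edgeFinset.card ≤ Fintype.card V * Fintype.card V := by
    have h1 := SimpleGraph.card_edgeFinset_le_card_choose_two (G := G)
    have h2 : (Fintype.card V).choose 2 * 2 ≤ Fintype.card V * Fintype.card V := by
      rw [Nat.choose_two_right]
      calc Fintype.card V * (Fintype.card V - 1) / 2 * 2
          ≤ Fintype.card V * (Fintype.card V - 1) := Nat.div_mul_le_self _ _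
        _ ≤ Fintype.card V * Fintype.card V :=
            Nat.mul_le_mul_left _ (Nat.sub_le _ _)
    omega
  have hmc : G.edgeFinset.card ≤ 2 * (A.card * A.card) := by
    have h1 : Fintype.card V ≤ 2 * A.card := by omega
    nlinarith [hmn, h1]
  have hcardpos : (0:ℝ) < A.card := by
    have : 0 < A.card := by omega
    exact_mod_cast this
  have hfa : (epairs G {a} B : ℝ) ≤ (G.edgeFinset.card : ℝ) / A.card := by
    rw [le_div_iff₀ hcardpos]
    have : A.card * epairs G {a} B ≤ G.edgeFinset.card := by omega
    calc (epairs G {a} B : ℝ) * A.card = ((A.card * epairs G {a} B : ℕ) : ℝ) := by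
          push_cast; ring
      _ ≤ (G.edgeFinset.card : ℝ) := by exact_mod_cast this
  have hdm : (G.edgeFinset.card : ℝ) / A.card ≤ 2 * Real.sqrt (G.edgeFinset.card) := by
    have hs : Real.sqrt (G.edgeFinset.card) * Real.sqrt (G.edgeFinset.card)
        = (G.edgeFinset.card : ℝ) := Real.mul_self_sqrt (by positivity)
    have h2 : (G.edgeFinset.card : ℝ) ≤ 2 * ((A.card : ℝ) * A.card) := by
      exact_mod_cast hmc
    have h3 : Real.sqrt (G.edgeFinset.card) ≤ 2 * (A.card : ℝ) := by
      rw [show (2 * (A.card:ℝ)) = Real.sqrt ((2 * (A.card:ℝ))^2) from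
        (Real.sqrt_sq (by positivity)).symm]
      exact Real.sqrt_le_sqrt (by nlinarith)
    rw [div_le_iff₀ hcardpos]
    nlinarith [Real.sqrt_nonneg ((G.edgeFinset.card : ℝ)), hs, h3]
  refine ⟨A.erase a, insert a B, ?_, ?_, ?_, ?_⟩
  · ext x
    simp only [Finset.mem_union, Finset.mem_erase, Finset.mem_insert, Finset.mem_univ,
      iff_true]
    by_cases hx : x = a
    · tauto
    · have hx2 : x ∈ A ∪ B := by rw [hU]; exact Finset.mem_univ x
      rcases Finset.mem_union.1 hx2 with h | h <;> tauto
  · rw [Finset.disjoint_insert_right]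
    exact ⟨Finset.notMem_erase a A, hd.mono_left (Finset.erase_subset a A)⟩
  · rw [Finset.card_erase_of_mem ha, Finset.card_insert_of_notMem haB]; omega
  · have hsplit : epairs G A B = epairs G {a} B + epairs G (A.erase a) B := by
      conv_lhs => rw [← Finset.insert_erase ha, Finset.insert_eq]
      rw [epairs_union_left G B (by simpa using Finset.notMem_erase a A)]
    have hsplit2 : epairs G (A.erase a) (insert a B)
        = epairs G (A.erase a) {a} + epairs G (A.erase a) B := by
      rw [Finset.insert_eq, epairs_union_right G _ (by simpa using haB)]
    have e1 : (epairs G A B : ℝ) - epairs G {a} B ≤ epairs G (A.erase a) (insert a B) := by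
      have h : epairs G A B ≤ epairs G (A.erase a) (insert a B) + epairs G {a} B := by
        omega
      have := (Nat.cast_le (α := ℝ)).2 h
      push_cast at this
      linarith
    linarith [hfa, hdm]

lemma final_step (A B : Finset V) (hU : A ∪ B = Finset.univ) (hd : Disjoint A B)
    (hbal : |(A.card : ℤ) - (B.card : ℤ)| ≤ 2) (x : ℝ)
    (hc : (G.edgeFinset.card : ℝ) / 2 + x ≤ (epairs G A B : ℝ)) :
    ∃ A' B' : Finset V, A' ∪ B' = Finset.univ ∧ Disjoint A' B' ∧
      |(A'.card : ℤ) - (B'.card : ℤ)| ≤ 1 ∧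
      (G.edgeFinset.card : ℝ) / 2 + x - 2 * Real.sqrt (G.edgeFinset.card)
        ≤ (epairs G A' B' : ℝ) := by
  by_cases h1 : |(A.card : ℤ) - (B.card : ℤ)| ≤ 1
  · exact ⟨A, B, hU, hd, h1, by
      have := Real.sqrt_nonneg ((G.edgeFinset.card : ℝ))
      linarith⟩
  · rw [abs_le] at hbal
    rw [abs_le] at h1
    push_neg at h1
    have h2 : A.card = B.card + 2 ∨ B.card = A.card + 2 := by omega
    rcases h2 with h2 | h2
    · obtain ⟨A', B', hU', hd', hc', hineq⟩ := bal G A B hU hd h2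
      exact ⟨A', B', hU', hd', by rw [hc']; simp, by linarith⟩
    · obtain ⟨B', A', hU', hd', hc', hineq⟩ := bal G B A
        (by rw [Finset.union_comm]; exact hU) hd.symm h2
      rw [epairs_comm G B A] at hineq
      exact ⟨B', A', hU', hd', by rw [hc']; simp, by linarith⟩

end Helpers

/-- If the induced subgraph `G[S]` has a bisection of size at least `e(G[S])/2 + x`,
then `G` has a bisection of size at least `m/2 + x − 2√m`. -/
theorem stmt_2 {V : Type*} [Fintype V] [DecidableEq V]
    (G : SimpleGraph V) [DecidableRel G.Adj] (S : Finset V) (x : ℝ)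
    (A₁ B₁ : Finset V) (hpart : A₁ ∪ B₁ = S) (hdisj : Disjoint A₁ B₁)
    (hbal : |(A₁.card : ℤ) - (B₁.card : ℤ)| ≤ 1)
    (hsize : (epairs G S S : ℝ) / 4 + x ≤ (epairs G A₁ B₁ : ℝ)) :
    ∃ A B : Finset V, A ∪ B = Finset.univ ∧ Disjoint A B ∧
      |(A.card : ℤ) - (B.card : ℤ)| ≤ 1 ∧
      (G.edgeFinset.card : ℝ) / 2 + x - 2 * Real.sqrt (G.edgeFinset.card)
        ≤ (epairs G A B : ℝ) := by
  classical
  set T : Finset V := Finset.univ \ S with hTdef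
  have hSU : S ∪ T = Finset.univ := Finset.union_sdiff_of_subset (Finset.subset_univ S)
  have hSdT : Disjoint S T := Finset.disjoint_sdiff
  have hA₁S : A₁ ⊆ S := hpart ▸ Finset.subset_union_left
  have hB₁S : B₁ ⊆ S := hpart ▸ Finset.subset_union_right
  have hA₁T : Disjoint A₁ T := hSdT.mono_left hA₁S
  have hB₁T : Disjoint B₁ T := hSdT.mono_left hB₁S
  have hglob : epairs G Finset.univ Finset.univ
      = epairs G S S + 2 * (epairs G T A₁ + epairs G T B₁) + epairs G T T := by
    have h1 : epairs G Finset.univ Finset.univ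
        = epairs G S S + epairs G S T + epairs G T S + epairs G T T := by
      rw [← hSU, epairs_union_left G _ hSdT, epairs_union_right G _ hSdT,
        epairs_union_right G _ hSdT]
      ring
    have h2 : epairs G S T = epairs G T S := epairs_comm G S T
    have h3 : epairs G T S = epairs G T A₁ + epairs G T B₁ := by
      rw [← hpart, epairs_union_right G _ hdisj]
    omega
  have cv : ∀ A B : Finset V,
      4 * epairs G A₁ B₁ + 2 * epairs G T A₁ + 2 * epairs G T B₁ + epairs G T T
        ≤ 4 * epairs G A B →
      (G.edgeFinset.card : ℝ) / 2 + x ≤ (epairs G A B : ℝ) := by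
    intro A B h
    have h' : ((4 * epairs G A₁ B₁ + 2 * epairs G T A₁ + 2 * epairs G T B₁
        + epairs G T T : ℕ) : ℝ) ≤ ((4 * epairs G A B : ℕ) : ℝ) := by exact_mod_cast h
    have hg : ((epairs G Finset.univ Finset.univ : ℕ) : ℝ)
        = ((epairs G S S + 2 * (epairs G T A₁ + epairs G T B₁) + epairs G T T : ℕ) : ℝ) := by
      exact_mod_cast hglob
    have h2m : ((epairs G Finset.univ Finset.univ : ℕ) : ℝ)
        = ((2 * G.edgeFinset.card : ℕ) : ℝ) := by exact_mod_cast epairs_univ_univ G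
    push_cast at h' hg h2m
    linarith [hsize]
  rcases Nat.even_or_odd T.card with he | ho
  · obtain ⟨k, hk⟩ := he
    obtain ⟨Ta, Tb, hUt, hDt, hCt, hIt⟩ := even_ext G k T A₁ B₁ (by omega) hA₁T hB₁T
    have hTaT : Ta ⊆ T := hUt ▸ Finset.subset_union_left
    have hTbT : Tb ⊆ T := hUt ▸ Finset.subset_union_right
    have hUU : (A₁ ∪ Ta) ∪ (B₁ ∪ Tb) = Finset.univ := by
      rw [← hSU, ← hpart, ← hUt]
      ext a
      simp only [Finset.mem_union]
      tauto
    have hDD : Disjoint (A₁ ∪ Ta) (B₁ ∪ Tb) :=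
      Finset.disjoint_union_left.2
        ⟨Finset.disjoint_union_right.2 ⟨hdisj, hA₁T.mono_right hTbT⟩,
         Finset.disjoint_union_right.2 ⟨(hB₁T.mono_right hTaT).symm, hDt⟩⟩
    have hb : |((A₁ ∪ Ta).card : ℤ) - ((B₁ ∪ Tb).card : ℤ)| ≤ 2 := by
      rw [Finset.card_union_of_disjoint (hA₁T.mono_right hTaT),
        Finset.card_union_of_disjoint (hB₁T.mono_right hTbT)]
      rw [abs_le] at hbal ⊢
      push_cast
      omega
    exact final_step G _ _ hUU hDD hb x (cv _ _ hIt)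
  · obtain ⟨k, hk⟩ := ho
    obtain ⟨w, hw⟩ : T.Nonempty := Finset.card_pos.1 (by omega)
    set T2 := T.erase w with hT2
    have hT2card : T2.card = 2 * k := by rw [hT2, Finset.card_erase_of_mem hw]; omega
    have hT2sub : T2 ⊆ T := Finset.erase_subset _ _
    have hwT2 : w ∉ T2 := Finset.notMem_erase _ _
    have hTw : T = {w} ∪ T2 := by rw [hT2, ← Finset.insert_eq, Finset.insert_erase hw]
    have dwT2 : Disjoint ({w} : Finset V) T2 := by simpa using hwT2
    obtain ⟨Ta, Tb, hUt, hDt, hCt, hIt⟩ := even_ext G k T2 A₁ B₁ hT2card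
      (hA₁T.mono_right hT2sub) (hB₁T.mono_right hT2sub)
    have hTaT2 : Ta ⊆ T2 := hUt ▸ Finset.subset_union_left
    have hTbT2 : Tb ⊆ T2 := hUt ▸ Finset.subset_union_right
    have dA₁Ta : Disjoint A₁ Ta := hA₁T.mono_right (hTaT2.trans hT2sub)
    have dB₁Tb : Disjoint B₁ Tb := hB₁T.mono_right (hTbT2.trans hT2sub)
    have hDD : Disjoint (A₁ ∪ Ta) (B₁ ∪ Tb) :=
      Finset.disjoint_union_left.2
        ⟨Finset.disjoint_union_right.2 ⟨hdisj, hA₁T.mono_right (hTbT2.trans hT2sub)⟩,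
         Finset.disjoint_union_right.2
           ⟨((hB₁T.mono_right (hTaT2.trans hT2sub))).symm, hDt⟩⟩
    have hwA₁ : w ∉ A₁ := fun h => Finset.disjoint_left.1 hA₁T h hw
    have hwB₁ : w ∉ B₁ := fun h => Finset.disjoint_left.1 hB₁T h hw
    have hwTa : w ∉ Ta := fun h => hwT2 (hTaT2 h)
    have hwTb : w ∉ Tb := fun h => hwT2 (hTbT2 h)
    have hwA₂ : w ∉ A₁ ∪ Ta := fun h => (Finset.mem_union.1 h).elim hwA₁ hwTa
    have hwB₂ : w ∉ B₁ ∪ Tb := fun h => (Finset.mem_union.1 h).elim hwB₁ hwTb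
    have e1 : epairs G T A₁ = epairs G {w} A₁ + epairs G T2 A₁ := by
      rw [hTw, epairs_union_left G _ dwT2]
    have e2 : epairs G T B₁ = epairs G {w} B₁ + epairs G T2 B₁ := by
      rw [hTw, epairs_union_left G _ dwT2]
    have e3 : epairs G T T = 2 * epairs G {w} T2 + epairs G T2 T2 := by
      rw [hTw, epairs_union_left G _ dwT2, epairs_union_right G _ dwT2,
        epairs_union_right G _ dwT2, epairs_singleton_self, epairs_comm G T2 {w}]
      ring
    have e4 : epairs G {w} (A₁ ∪ Ta) = epairs G {w} A₁ + epairs G {w} Ta :=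
      epairs_union_right G _ dA₁Ta
    have e5 : epairs G {w} (B₁ ∪ Tb) = epairs G {w} B₁ + epairs G {w} Tb :=
      epairs_union_right G _ dB₁Tb
    have e6 : epairs G {w} Ta + epairs G {w} Tb = epairs G {w} T2 := by
      rw [← hUt, epairs_union_right G _ hDt]
    rcases le_total (epairs G {w} (A₁ ∪ Ta)) (epairs G {w} (B₁ ∪ Tb)) with hcmp | hcmp
    · have hcut : epairs G ((A₁ ∪ Ta) ∪ {w}) (B₁ ∪ Tb)
          = epairs G (A₁ ∪ Ta) (B₁ ∪ Tb) + epairs G {w} (B₁ ∪ Tb) := by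
        rw [epairs_union_left G _ (by simpa using hwA₂)]
      have hkey : 4 * epairs G A₁ B₁ + 2 * epairs G T A₁ + 2 * epairs G T B₁
          + epairs G T T ≤ 4 * epairs G ((A₁ ∪ Ta) ∪ {w}) (B₁ ∪ Tb) := by
        omega
      have hU3 : ((A₁ ∪ Ta) ∪ {w}) ∪ (B₁ ∪ Tb) = Finset.univ := by
        rw [← hSU, ← hpart, hTw, ← hUt]
        ext a
        simp only [Finset.mem_union]
        tauto
      have hD3 : Disjoint ((A₁ ∪ Ta) ∪ {w}) (B₁ ∪ Tb) :=
        Finset.disjoint_union_left.2 ⟨hDD, by simpa using hwB₂⟩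
      have dax : Disjoint (A₁ ∪ Ta) ({w} : Finset V) := by simpa using hwA₂
      have hb : |(((A₁ ∪ Ta) ∪ {w}).card : ℤ) - ((B₁ ∪ Tb).card : ℤ)| ≤ 2 := by
        rw [Finset.card_union_of_disjoint dax,
          Finset.card_union_of_disjoint dA₁Ta, Finset.card_union_of_disjoint dB₁Tb]
        simp only [Finset.card_singleton]
        rw [abs_le] at hbal ⊢
        push_cast
        omega
      exact final_step G _ _ hU3 hD3 hb x (cv _ _ hkey)
    · have hcut : epairs G (A₁ ∪ Ta) ((B₁ ∪ Tb) ∪ {w})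
          = epairs G (A₁ ∪ Ta) (B₁ ∪ Tb) + epairs G {w} (A₁ ∪ Ta) := by
        rw [epairs_union_right G _ (by simpa using hwB₂), epairs_comm G (A₁ ∪ Ta) {w}]
      have hkey : 4 * epairs G A₁ B₁ + 2 * epairs G T A₁ + 2 * epairs G T B₁
          + epairs G T T ≤ 4 * epairs G (A₁ ∪ Ta) ((B₁ ∪ Tb) ∪ {w}) := by
        omega
      have hU3 : (A₁ ∪ Ta) ∪ ((B₁ ∪ Tb) ∪ {w}) = Finset.univ := by
        rw [← hSU, ← hpart, hTw, ← hUt]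
        ext a
        simp only [Finset.mem_union]
        tauto
      have hD3 : Disjoint (A₁ ∪ Ta) ((B₁ ∪ Tb) ∪ {w}) :=
        Finset.disjoint_union_right.2 ⟨hDD, by simpa using hwA₂⟩
      have dbx : Disjoint (B₁ ∪ Tb) ({w} : Finset V) := by simpa using hwB₂
      have hb : |((A₁ ∪ Ta).card : ℤ) - (((B₁ ∪ Tb) ∪ {w}).card : ℤ)| ≤ 2 := by
        rw [Finset.card_union_of_disjoint dbx,
          Finset.card_union_of_disjoint dA₁Ta, Finset.card_union_of_disjoint dB₁Tb]
        simp only [Finset.card_singleton]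
        rw [abs_le] at hbal ⊢
        push_cast
        omega
      exact final_step G _ _ hU3 hD3 hb x (cv _ _ hkey)
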